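/- The semantics of the MatchKAT increment program is correct: for bit range [i…j] holding a binary number (bit i most significant), the term [i…j]⁺⁺ defined by [i…j]⁺⁺ = ⊤ if j < i, and otherwise (j≃0 · j←1) + (j≃1 · j←0 · [i…j−1]⁺⁺), maps each packet π to the packet whose [i…j] field value is (v+1) mod 2^{j−i+1} where v is the value of π's bits i through j, leaving all other bits unchanged. -/

import Mathlib

/-- Packets: binary strings of length `n`. -/
abbrev Pk (n : ℕ) := List.Vector Bool n

/-- The `p`-th bit of a packet. -/
def getBit {n : ℕ} (π : Pk n) (p : ℕ) : Bool := π.toList.getD p false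

/-- The packet `π[p ← k]`. -/
def setBit {n : ℕ} (π : Pk n) (p : ℕ) (k : Bool) : Pk n :=
  ⟨π.1.set p k, by rw [List.length_set]; exact π.2⟩

/-- MatchKAT terms of packet size `n`: `eq p k` is the single-bit test
`p ≃ k` (the match expression `⊤_{p-1} k ⊤_{n-p}`), `assign p k` is `p ← k`. -/
inductive MK (n : ℕ) : Type
  | bot : MK n
  | top : MK n
  | eq (p : ℕ) (k : Bool) : MK n
  | assign (p : ℕ) (k : Bool) : MK n
  | plus (a b : MK n) : MK n
  | seq (a b : MK n) : MK n
  | star (a : MK n) : MK n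
  | compl (a : MK n) : MK n

/-- Packet filtering semantics of MatchKAT. -/
def mksem {n : ℕ} : MK n → Set (Pk n) → Set (Pk n)
  | .bot, _ => ∅
  | .top, P => P
  | .eq p k, P => {π ∈ P | getBit π p = k}
  | .assign p k, P => (fun π => setBit π p k) '' P
  | .plus a b, P => mksem a P ∪ mksem b P
  | .seq a b, P => mksem b (mksem a P)
  | .star a, P => ⋃ m : ℕ, (mksem a)^[m] P
  | .compl a, P => Set.univ \ mksem a P

/-- `v` as the value of a bit list, most significant bit first. -/
def bitsToNat (l : List Bool) : ℕ := l.foldl (fun a b => 2 * a + b.toNat) 0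

/-- The `w`-bit binary representation of `v`, most significant bit first. -/
def natToBits (w v : ℕ) : List Bool := (List.range w).map fun t => v.testBit (w - 1 - t)

/-- The increment program on the `w` bits starting at position `i`
(so `[i…j]⁺⁺ = incW i (j+1-i)`):
`incW i 0 = ⊤` and otherwise, with `j = i + w` the least significant bit,
`(j≃0 · j←1) + (j≃1 · j←0 · [i…j−1]⁺⁺)`. -/
def incW {n : ℕ} (i : ℕ) : ℕ → MK n
  | 0 => .top
  | w + 1 =>
      .plus (.seq (.eq (i + w) false) (.assign (i + w) true))
            (.seq (.eq (i + w) true) (.seq (.assign (i + w) false) (incW i w)))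


lemma bitsToNat_append_singleton (l : List Bool) (b : Bool) :
    bitsToNat (l ++ [b]) = 2 * bitsToNat l + b.toNat := by
  simp [bitsToNat, List.foldl_append]

lemma bitsToNat_lt (l : List Bool) : bitsToNat l < 2 ^ l.length := by
  induction l using List.reverseRecOn with
  | nil => simp [bitsToNat]
  | append_singleton l b ih =>
      rw [bitsToNat_append_singleton]
      have : b.toNat ≤ 1 := Bool.toNat_le b
      simp only [List.length_append, List.length_singleton, pow_succ]
      omega

lemma natToBits_succ (w v : ℕ) :
    natToBits (w + 1) v = natToBits w (v / 2) ++ [v.testBit 0] := by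
  simp only [natToBits, List.range_succ, List.map_append, List.map_cons, List.map_nil]
  congr 1
  · apply List.map_congr_left
    intro t ht
    rw [List.mem_range] at ht
    have h1 : w + 1 - 1 - t = (w - 1 - t) + 1 := by omega
    rw [h1, Nat.testBit_succ]
  · simp

lemma natToBits_bitsToNat (l : List Bool) : natToBits l.length (bitsToNat l) = l := by
  induction l using List.reverseRecOn with
  | nil => simp [natToBits]
  | append_singleton l b ih =>
      rw [bitsToNat_append_singleton]
      simp only [List.length_append, List.length_singleton]
      rw [natToBits_succ]
      have h1 : (2 * bitsToNat l + b.toNat) / 2 = bitsToNat l := by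
        cases b <;> simp [Nat.mul_add_div]
      have h2 : (2 * bitsToNat l + b.toNat).testBit 0 = b := by
        rw [Nat.testBit_zero]
        cases b <;> simp [Nat.mul_add_mod]
      rw [h1, h2, ih]

lemma mksem_incW_empty {n : ℕ} (i w : ℕ) : mksem (incW i w : MK n) ∅ = ∅ := by
  induction w with
  | zero => simp [incW, mksem]
  | succ w ih => simp [incW, mksem, ih]

lemma list_set_eq {α : Type*} (l : List α) {p : ℕ} (h : p < l.length) (a : α) :
    l.set p a = l.take p ++ a :: l.drop (p + 1) := by
  rw [List.set_eq_take_append_cons_drop, if_pos h]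

lemma incW_sem {n : ℕ} (i : ℕ) : ∀ (w : ℕ), i + w ≤ n → ∀ π : Pk n,
    mksem (incW i w) {π} =
      {π' : Pk n | π'.toList =
        π.toList.take i ++
          natToBits w ((bitsToNat ((π.toList.drop i).take w) + 1) % 2 ^ w) ++
          π.toList.drop (i + w)} := by
  intro w
  induction w with
  | zero =>
      intro _ π
      ext π'
      simp only [incW, mksem, Set.mem_singleton_iff, Set.mem_setOf_eq]
      simp only [natToBits, List.range_zero, List.map_nil, List.append_nil,
        Nat.add_zero, List.take_append_drop]
      constructor
      · rintro rfl; rfl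
      · intro h; exact List.Vector.toList_injective h
  | succ w ih =>
      intro hwn π
      simp only [show i + (w + 1) = i + w + 1 from rfl] at *
      have hln : π.toList.length = n := π.toList_length
      have hiw : i + w < n := by omega
      set l := π.toList with hl
      set m : List Bool := (l.drop i).take w with hm
      have hml : m.length = w := by
        rw [hm, List.length_take, List.length_drop, hln]; omega
      have htl : (l.take i).length = i := by
        rw [List.length_take, hln]; omega
      have hu := bitsToNat_lt m
      rw [hml] at hu
      set u : ℕ := bitsToNat m with hudef
      have hnbm : natToBits w u = m := by rw [hudef, ← hml, natToBits_bitsToNat]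
      have hgb : getBit π (i + w) = l[i + w]'(by omega) := by
        simp [getBit, ← hl, List.getD_eq_getElem?_getD,
          List.getElem?_eq_getElem (show i + w < l.length by omega)]
      have hmsucc : (l.drop i).take (w + 1) = m ++ [getBit π (i + w)] := by
        rw [List.take_succ, hgb]
        congr 1
        rw [List.getElem?_drop, List.getElem?_eq_getElem (show i + w < l.length by omega)]
        rfl
      have htake : l.take (i + w) = l.take i ++ m := List.take_add
      have hsem : mksem (incW i (w + 1)) {π} =
          ((fun x => setBit x (i + w) true) ''
            {x ∈ ({π} : Set (Pk n)) | getBit x (i + w) = false}) ∪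
          mksem (incW i w) ((fun x => setBit x (i + w) false) ''
            {x ∈ ({π} : Set (Pk n)) | getBit x (i + w) = true}) := rfl
      cases hb : getBit π (i + w) with
      | false =>
          have h1 : {x ∈ ({π} : Set (Pk n)) | getBit x (i + w) = false} = {π} := by
            ext x
            simp (config := { contextual := true }) [hb]
          have h2 : {x ∈ ({π} : Set (Pk n)) | getBit x (i + w) = true} = ∅ := by
            ext x
            simp (config := { contextual := true }) [hb]
          rw [hsem, h1, h2, Set.image_empty, mksem_incW_empty, Set.union_empty,
            Set.image_singleton]
          have hv : bitsToNat ((l.drop i).take (w + 1)) + 1 = 2 * u + 1 := by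
            rw [hmsucc, hb, bitsToNat_append_singleton]; rfl
          have hmod : (2 * u + 1) % 2 ^ (w + 1) = 2 * u + 1 :=
            Nat.mod_eq_of_lt (by rw [pow_succ]; omega)
          have hnb : natToBits (w + 1) (2 * u + 1) = m ++ [true] := by
            rw [natToBits_succ]
            have hd : (2 * u + 1) / 2 = u := by omega
            have ht : (2 * u + 1).testBit 0 = true := by
              simp [Nat.testBit_zero, Nat.mul_add_mod]
            rw [hd, ht, hnbm]
          have hset : (setBit π (i + w) true).toList =
              l.take i ++ (m ++ [true]) ++ l.drop (i + w + 1) := by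
            show l.set (i + w) true = _
            rw [list_set_eq l (show i + w < l.length by omega), htake]
            simp
          ext π'
          simp only [Set.mem_singleton_iff, Set.mem_setOf_eq, hv, hmod, hnb]
          rw [← hset]
          constructor
          · rintro rfl; rfl
          · intro h; exact List.Vector.toList_injective h
      | true =>
          have h1 : {x ∈ ({π} : Set (Pk n)) | getBit x (i + w) = false} = ∅ := by
            ext x
            simp (config := { contextual := true }) [hb]
          have h2 : {x ∈ ({π} : Set (Pk n)) | getBit x (i + w) = true} = {π} := by
            ext x
            simp (config := { contextual := true }) [hb]
          rw [hsem, h1, h2, Set.image_empty, Set.empty_union, Set.image_singleton]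
          set π₂ : Pk n := setBit π (i + w) false with hπ₂
          have hset : π₂.toList = (l.take i ++ m) ++ false :: l.drop (i + w + 1) := by
            show l.set (i + w) false = _
            rw [list_set_eq l (show i + w < l.length by omega), htake]
          have hlen2 : (l.take i ++ m).length = i + w := by
            rw [List.length_append, htl, hml]
          have hassoc : π₂.toList = l.take i ++ (m ++ false :: l.drop (i + w + 1)) := by
            rw [hset, List.append_assoc]
          have hp2take : π₂.toList.take i = l.take i := by
            rw [hassoc, List.take_left' htl]
          have hp2dt : (π₂.toList.drop i).take w = m := by
            rw [hassoc, List.drop_left' htl, List.take_left' hml]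
          have hp2drop : π₂.toList.drop (i + w) = false :: l.drop (i + w + 1) := by
            rw [hset, List.drop_left' hlen2]
          rw [ih (by omega) π₂, hp2take, hp2dt, hp2drop]
          have hv : bitsToNat ((l.drop i).take (w + 1)) + 1 = 2 * (u + 1) := by
            rw [hmsucc, hb, bitsToNat_append_singleton]
            simp [Bool.toNat]
            omega
          have hmod : 2 * (u + 1) % 2 ^ (w + 1) = 2 * ((u + 1) % 2 ^ w) := by
            rw [pow_succ', Nat.mul_mod_mul_left]
          have hnb : natToBits (w + 1) (2 * ((u + 1) % 2 ^ w)) =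
              natToBits w ((u + 1) % 2 ^ w) ++ [false] := by
            rw [natToBits_succ]
            have hd : 2 * ((u + 1) % 2 ^ w) / 2 = (u + 1) % 2 ^ w := by omega
            have ht : (2 * ((u + 1) % 2 ^ w)).testBit 0 = false := by
              simp [Nat.testBit_zero, Nat.mul_mod_right]
            rw [hd, ht]
          ext π'
          simp only [Set.mem_setOf_eq, hv, hmod, hnb]
          simp [List.append_assoc, hudef]

/-- Correctness of the MatchKAT increment program: `[i…j]⁺⁺` maps a packet `π`
to the unique packet whose bits `i` through `j` hold `(v+1) mod 2^(j−i+1)`,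
where `v` is the value of `π`'s bits `i` through `j` (bit `i` most
significant), all other bits unchanged. (Bit positions are 0-based.) -/
theorem incW_correct {n : ℕ} (i j : ℕ) (hij : i ≤ j) (hj : j < n) (π : Pk n) :
    mksem (incW i (j + 1 - i)) {π} =
      {π' : Pk n | π'.toList =
        π.toList.take i ++
          natToBits (j + 1 - i)
            ((bitsToNat ((π.toList.drop i).take (j + 1 - i)) + 1) % 2 ^ (j + 1 - i)) ++
          π.toList.drop (j + 1)} := by
  have h1 : i + (j + 1 - i) = j + 1 := by omega
  rw [incW_sem i (j + 1 - i) (by omega) π, h1]
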